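/- Let X be a metric space with a free action of a finite group G of order > 1 such that for every continuous map h : X → ℝⁿ there exist x ∈ X and distinct g, g' ∈ G with h(gx) = h(g'x) (the 2-th Borsuk–Ulam property). Then for every cover of X by n+1 open sets U_1, ..., U_{n+1}, there is some U_j containing both gx and g'x for some x ∈ X and distinct g, g' ∈ G. Consequently, the quotient map q : X → X/G satisfies IC(q) ≥ n + 2. -/

import Mathlib

open Set

/-- The injective category number of a map: the smallest positive integer ℓ such that the
domain can be covered by ℓ open sets on each of which the map is injective; `⊤` if none. -/
noncomputable def IC {X Y : Type*} [TopologicalSpace X] (f : X → Y) : ℕ∞ :=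
  sInf {n : ℕ∞ | ∃ k : ℕ, n = k ∧ 0 < k ∧ ∃ U : Fin k → Set X,
    (∀ i, IsOpen (U i)) ∧ (⋃ i, U i) = Set.univ ∧ ∀ i, Set.InjOn f (U i)}

theorem stmt_19 {X : Type*} [MetricSpace X] {G : Type*} [Group G] [Fintype G] [Nontrivial G]
    [MulAction G X] (hcont : ∀ g : G, Continuous fun x : X => g • x)
    (hfree : ∀ (g : G) (x : X), g • x = x → g = 1) (n : ℕ)
    (hBU : ∀ h : X → EuclideanSpace ℝ (Fin n), Continuous h →
      ∃ (x : X) (g g' : G), g ≠ g' ∧ h (g • x) = h (g' • x)) :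
    (∀ U : Fin (n + 1) → Set X, (∀ i, IsOpen (U i)) → (⋃ i, U i) = Set.univ →
      ∃ (j : Fin (n + 1)) (x : X) (g g' : G), g ≠ g' ∧ g • x ∈ U j ∧ g' • x ∈ U j) ∧
    ((n + 2 : ℕ∞) ≤ IC (Quotient.mk (MulAction.orbitRel G X))) := by
  have key : ∀ U : Fin (n + 1) → Set X, (∀ i, IsOpen (U i)) → (⋃ i, U i) = Set.univ →
      ∃ (j : Fin (n + 1)) (x : X) (g g' : G), g ≠ g' ∧ g • x ∈ U j ∧ g' • x ∈ U j := by
    intro U hopen hcover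
    by_cases hne : ∀ j, ((U j)ᶜ).Nonempty
    · by_contra hcon
      push_neg at hcon
      have hc : Continuous (fun x : X =>
          (WithLp.toLp 2 (fun i : Fin n => Metric.infDist x (U i.castSucc)ᶜ) : EuclideanSpace ℝ (Fin n))) := by
        refine (PiLp.continuous_toLp 2 _).comp ?_
        apply continuous_pi
        intro i
        exact Metric.continuous_infDist_pt _
      obtain ⟨x, g, g', hgg, heq⟩ := hBU _ hc
      have hco : ∀ i : Fin n,
          Metric.infDist (g • x) (U i.castSucc)ᶜ = Metric.infDist (g' • x) (U i.castSucc)ᶜ :=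
        fun i => congrArg (fun v : EuclideanSpace ℝ (Fin n) => v i) heq
      have hclosed : ∀ i : Fin n, IsClosed (U i.castSucc)ᶜ := fun i => (hopen _).isClosed_compl
      by_cases hpos : ∃ i : Fin n, 0 < Metric.infDist (g • x) (U i.castSucc)ᶜ
      · obtain ⟨i, hi⟩ := hpos
        have h1 : g • x ∈ U i.castSucc := by
          have := ((hclosed i).notMem_iff_infDist_pos (hne _)).2 hi
          simpa using this
        have h2 : g' • x ∈ U i.castSucc := by
          have := ((hclosed i).notMem_iff_infDist_pos (hne _)).2 (by rw [← hco i]; exact hi)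
          simpa using this
        exact hcon i.castSucc x g g' hgg h1 h2
      · push_neg at hpos
        have hz : ∀ i : Fin n, Metric.infDist (g • x) (U i.castSucc)ᶜ = 0 :=
          fun i => le_antisymm (hpos i) Metric.infDist_nonneg
        have hnot : ∀ i : Fin n, g • x ∉ U i.castSucc := by
          intro i hi
          have : 0 < Metric.infDist (g • x) (U i.castSucc)ᶜ :=
            ((hclosed i).notMem_iff_infDist_pos (hne _)).1 (by simpa using hi)
          exact this.ne' (hz i)
        have hnot' : ∀ i : Fin n, g' • x ∉ U i.castSucc := by
          intro i hi
          have : 0 < Metric.infDist (g' • x) (U i.castSucc)ᶜ :=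
            ((hclosed i).notMem_iff_infDist_pos (hne _)).1 (by simpa using hi)
          rw [← hco i, hz i] at this
          exact this.ne' rfl
        have hmem : ∀ y : X, y ∈ ⋃ i, U i := fun y => by rw [hcover]; trivial
        have h1 : g • x ∈ U (Fin.last n) := by
          obtain ⟨_, ⟨j, rfl⟩, hj⟩ := hmem (g • x)
          rcases Fin.eq_castSucc_or_eq_last j with ⟨i, rfl⟩ | rfl
          · exact absurd hj (hnot i)
          · exact hj
        have h2 : g' • x ∈ U (Fin.last n) := by
          obtain ⟨_, ⟨j, rfl⟩, hj⟩ := hmem (g' • x)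
          rcases Fin.eq_castSucc_or_eq_last j with ⟨i, rfl⟩ | rfl
          · exact absurd hj (hnot' i)
          · exact hj
        exact hcon (Fin.last n) x g g' hgg h1 h2
    · push_neg at hne
      obtain ⟨j, hj⟩ := hne
      have hU : U j = Set.univ := by
        rw [← compl_empty_iff]
        exact hj
      obtain ⟨x, -, -, -, -⟩ := hBU (fun _ => 0) continuous_const
      obtain ⟨g, hg⟩ := exists_ne (1 : G)
      exact ⟨j, x, g, 1, hg, by rw [hU]; trivial, by rw [hU]; trivial⟩
  refine ⟨key, ?_⟩
  apply le_sInf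
  rintro m ⟨k, rfl, hk, U, hopen, hcover, hinj⟩
  have : n + 2 ≤ k := by
    by_contra hlt
    push_neg at hlt
    have hlt' : k ≤ n + 1 := by omega
    set V : Fin (n + 1) → Set X := fun i => if h : (i : ℕ) < k then U ⟨i, h⟩ else ∅ with hV
    have hVopen : ∀ i, IsOpen (V i) := by
      intro i
      rw [hV]
      dsimp only
      split
      · exact hopen _
      · exact isOpen_empty
    have hVcover : (⋃ i, V i) = Set.univ := by
      apply Set.eq_univ_of_forall
      intro y
      have : y ∈ ⋃ i, U i := by rw [hcover]; trivial
      obtain ⟨_, ⟨i, rfl⟩, hi⟩ := this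
      have hik : (i : ℕ) < k := i.isLt
      have hin : (i : ℕ) < n + 1 := lt_of_lt_of_le hik hlt'
      refine Set.mem_iUnion.2 ⟨⟨(i : ℕ), hin⟩, ?_⟩
      rw [hV]
      dsimp only
      rw [dif_pos hik]
      simpa using hi
    obtain ⟨j, x, g, g', hgg, h1, h2⟩ := key V hVopen hVcover
    have hjk : (j : ℕ) < k := by
      by_contra hjk
      rw [hV] at h1
      simp only [dif_neg hjk] at h1
      exact h1
    rw [hV] at h1 h2
    simp only [dif_pos hjk] at h1 h2
    have hq : Quotient.mk (MulAction.orbitRel G X) (g • x)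
        = Quotient.mk (MulAction.orbitRel G X) (g' • x) := by
      apply Quotient.sound
      change g • x ∈ MulAction.orbit G (g' • x)
      exact MulAction.mem_orbit_iff.mpr ⟨g * g'⁻¹, by rw [smul_smul, inv_mul_cancel_right]⟩
    have heq : g • x = g' • x := hinj _ h1 h2 hq
    have : g'⁻¹ * g = 1 := by
      apply hfree _ x
      rw [mul_smul, heq, ← mul_smul, inv_mul_cancel, one_smul]
    exact hgg (by rwa [inv_mul_eq_one, eq_comm] at this)
  exact_mod_cast Nat.cast_le.mpr this
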